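/- Let d ≥ 1 and let x₁,…,x_n be n points in a metric measure space (X, dist, ν) with ν a probability measure such that every ball of radius r ≤ r₀ has ν-measure at most C·r^d. Then the 2-Wasserstein distance satisfies W₂((1/n)Σ_k δ_{x_k}, ν) ≥ c · n^{-1/d} for constants c > 0, depending only on C, d, r₀ (and n large enough). -/

import Mathlib

open Real MeasureTheory Metric
open scoped ENNReal

/-- The `p`-Wasserstein distance (as an extended real), defined via couplings. -/
noncomputable def Wp {X : Type*} [MeasurableSpace X] [PseudoMetricSpace X]
    (p : ℝ) (μ ν : Measure X) : ℝ≥0∞ :=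
  ⨅ (γ : Measure (X × X)) (_ : γ.map Prod.fst = μ) (_ : γ.map Prod.snd = ν),
    (∫⁻ z, edist z.1 z.2 ^ p ∂γ) ^ (1 / p)

/-- Lower bound for the Wasserstein distance of `n` Dirac masses to an upper-regular
probability measure: if `ν(B(x,r)) ≤ C r^d` for all `r ≤ r₀`, then
`W₂((1/n) Σ δ_{x_k}, ν) ≥ c n^{-1/d}` for all large `n`, with `c = c(C, d, r₀)`. -/
theorem stmt10 {X : Type*} [MeasurableSpace X] [MetricSpace X] [BorelSpace X]
    (d : ℕ) (hd : 1 ≤ d) (ν : Measure X) [IsProbabilityMeasure ν]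
    (C r₀ : ℝ) (hC : 0 < C) (hr₀ : 0 < r₀)
    (hreg : ∀ (x : X) (r : ℝ), 0 < r → r ≤ r₀ →
      ν (Metric.ball x r) ≤ ENNReal.ofReal (C * r ^ d)) :
    ∃ c : ℝ, 0 < c ∧ ∃ n₀ : ℕ, ∀ n : ℕ, n₀ ≤ n → ∀ x : Fin n → X,
      ENNReal.ofReal (c * (n : ℝ) ^ (-(1 : ℝ) / d))
        ≤ Wp 2 ((n : ℝ≥0∞)⁻¹ • ∑ k : Fin n, Measure.dirac (x k)) ν := by
  have hdR : (0:ℝ) < d := by exact_mod_cast hd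
  have hhalf : (2:ℝ≥0∞)⁻¹ = ENNReal.ofReal (1/2) := by
    rw [ENNReal.ofReal_div_of_pos two_pos, ENNReal.ofReal_one, ENNReal.ofReal_ofNat, one_div]
  set a : ℝ := min r₀ ((1/(2*C)) ^ ((1:ℝ)/d)) with ha_def
  have ha : 0 < a := lt_min hr₀ (Real.rpow_pos_of_pos (by positivity) _)
  have hCad : C * a ^ d ≤ 1/2 := by
    have h1 : a ^ d ≤ ((1/(2*C)) ^ ((1:ℝ)/d)) ^ d :=
      pow_le_pow_left₀ ha.le (min_le_right _ _) d
    have h2 : ((1/(2*C)) ^ ((1:ℝ)/d)) ^ d = 1/(2*C) := by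
      rw [← Real.rpow_natCast ((1/(2*C)) ^ ((1:ℝ)/d)) d, ← Real.rpow_mul (by positivity),
        one_div_mul_cancel (ne_of_gt hdR), Real.rpow_one]
    have := mul_le_mul_of_nonneg_left (h2 ▸ h1) hC.le
    calc C * a ^ d ≤ C * (1/(2*C)) := this
    _ = 1/2 := by field_simp
  refine ⟨a/2, by positivity, 1, fun n hn x => ?_⟩
  have hn1 : (1:ℝ) ≤ n := by exact_mod_cast hn
  have hnpos : (0:ℝ) < n := by linarith
  set ε : ℝ := a * (n:ℝ) ^ (-(1:ℝ)/d) with hε_def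
  have hεpos : 0 < ε := by positivity
  have hεr₀ : ε ≤ r₀ := by
    have h1 : (n:ℝ) ^ (-(1:ℝ)/d) ≤ 1 := by
      apply Real.rpow_le_one_of_one_le_of_nonpos hn1
      rw [neg_div]; simp [le_of_lt (by positivity : (0:ℝ) < 1/d)]
    calc ε ≤ a * 1 := mul_le_mul_of_nonneg_left h1 ha.le
    _ = a := mul_one a
    _ ≤ r₀ := min_le_left _ _
  set A : Set X := ⋃ k : Fin n, Metric.ball (x k) ε with hA_def
  have hAmeas : MeasurableSet A := MeasurableSet.iUnion fun k => measurableSet_ball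
  have hAsmall : ν A ≤ 2⁻¹ := by
    calc ν A ≤ ∑ k : Fin n, ν (Metric.ball (x k) ε) := measure_iUnion_fintype_le _ _
    _ ≤ ∑ _k : Fin n, ENNReal.ofReal (C * ε ^ d) :=
        Finset.sum_le_sum fun k _ => hreg (x k) ε hεpos hεr₀
    _ = (n : ℝ≥0∞) * ENNReal.ofReal (C * ε ^ d) := by
        simp [Finset.sum_const, nsmul_eq_mul]
    _ = ENNReal.ofReal ((n:ℝ) * (C * ε ^ d)) := by
        rw [← ENNReal.ofReal_natCast n, ← ENNReal.ofReal_mul (by positivity)]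
    _ ≤ ENNReal.ofReal (1/2) := by
        apply ENNReal.ofReal_le_ofReal
        have hεd : ε ^ d = a ^ d * ((n:ℝ))⁻¹ := by
          rw [hε_def, mul_pow, ← Real.rpow_natCast ((n:ℝ) ^ (-(1:ℝ)/d)) d,
            ← Real.rpow_mul hnpos.le, div_mul_cancel₀ _ (ne_of_gt hdR), Real.rpow_neg_one]
        rw [hεd]
        have heq : (n:ℝ) * (C * (a ^ d * ((n:ℝ))⁻¹)) = C * a ^ d := by
          field_simp
        rw [heq]; exact hCad
    _ = 2⁻¹ := hhalf.symm
  have hAc : 2⁻¹ ≤ ν Aᶜ := by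
    have h := measure_add_measure_compl (μ := ν) hAmeas
    rw [measure_univ] at h
    have h2 : ν Aᶜ = 1 - ν A := by
      rw [← h, ENNReal.add_sub_cancel_left (measure_ne_top ν A)]
    rw [h2]
    calc (2:ℝ≥0∞)⁻¹ = 1 - 2⁻¹ := by
          rw [← ENNReal.inv_two_add_inv_two, ENNReal.add_sub_cancel_left (by norm_num)]
    _ ≤ 1 - ν A := tsub_le_tsub_left hAsmall 1
  refine le_iInf fun γ => le_iInf fun h1 => le_iInf fun h2 => ?_
  set S : Set X := Set.range x with hS_def
  have hSmeas : MeasurableSet S := (Set.finite_range x).measurableSet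
  have hS0 : γ (Prod.fst ⁻¹' Sᶜ) = 0 := by
    have hmap : γ.map Prod.fst Sᶜ = γ (Prod.fst ⁻¹' Sᶜ) :=
      Measure.map_apply measurable_fst hSmeas.compl
    rw [← hmap, h1, Measure.smul_apply, Measure.coe_finset_sum, Finset.sum_apply]
    have hz : ∀ k : Fin n, Measure.dirac (x k) Sᶜ = 0 := fun k => by
      rw [Measure.dirac_apply' _ hSmeas.compl,
        Set.indicator_of_notMem (by simp [hS_def] : x k ∉ Sᶜ)]
    simp [hz]
  set E : Set (X × X) := ⋃ k : Fin n, ({x k} ×ˢ (Metric.ball (x k) ε)ᶜ) with hE_def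
  have hEmeas : MeasurableSet E :=
    MeasurableSet.iUnion fun k =>
      (measurableSet_singleton _).prod measurableSet_ball.compl
  have hEdist : ∀ z ∈ E, ε ≤ dist z.1 z.2 := by
    intro z hz
    rw [hE_def, Set.mem_iUnion] at hz
    obtain ⟨k, hk1, hk2⟩ := hz
    simp only [Set.mem_singleton_iff] at hk1
    rw [hk1]
    have := (Metric.mem_ball.not).mp hk2
    rw [dist_comm]; linarith [not_lt.mp this]
  have hsub : Prod.snd ⁻¹' Aᶜ ⊆ E ∪ Prod.fst ⁻¹' Sᶜ := by
    intro z hz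
    by_cases hz1 : z.1 ∈ S
    · left
      obtain ⟨k, hk⟩ := hz1
      rw [hE_def, Set.mem_iUnion]
      refine ⟨k, by simp [hk], fun hb => ?_⟩
      have : z.2 ∈ A := Set.mem_iUnion.mpr ⟨k, hb⟩
      exact hz this
    · right; exact hz1
  have hEbig : 2⁻¹ ≤ γ E := by
    have hν : γ (Prod.snd ⁻¹' Aᶜ) = ν Aᶜ := by
      rw [← Measure.map_apply measurable_snd hAmeas.compl, h2]
    calc (2:ℝ≥0∞)⁻¹ ≤ ν Aᶜ := hAc
    _ = γ (Prod.snd ⁻¹' Aᶜ) := hν.symm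
    _ ≤ γ (E ∪ Prod.fst ⁻¹' Sᶜ) := measure_mono hsub
    _ ≤ γ E + γ (Prod.fst ⁻¹' Sᶜ) := measure_union_le _ _
    _ = γ E := by rw [hS0, add_zero]
  have hint : ENNReal.ofReal ε ^ (2:ℝ) * 2⁻¹ ≤ ∫⁻ z, edist z.1 z.2 ^ (2:ℝ) ∂γ := by
    calc ENNReal.ofReal ε ^ (2:ℝ) * 2⁻¹ ≤ ENNReal.ofReal ε ^ (2:ℝ) * γ E :=
          mul_le_mul_right hEbig _
    _ = ∫⁻ z, E.indicator (fun _ => ENNReal.ofReal ε ^ (2:ℝ)) z ∂γ := by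
          rw [lintegral_indicator_const hEmeas]
    _ ≤ ∫⁻ z, edist z.1 z.2 ^ (2:ℝ) ∂γ := by
          apply lintegral_mono
          intro z
          by_cases hz : z ∈ E
          · rw [Set.indicator_of_mem hz]
            apply ENNReal.rpow_le_rpow _ (by norm_num)
            rw [edist_dist]
            exact ENNReal.ofReal_le_ofReal (hEdist z hz)
          · rw [Set.indicator_of_notMem hz]; exact zero_le
  calc ENNReal.ofReal (a/2 * (n:ℝ) ^ (-(1:ℝ)/d)) = ENNReal.ofReal (ε/2) := by
        congr 1; rw [hε_def]; ring
  _ = ((ENNReal.ofReal (ε/2)) ^ (2:ℝ)) ^ ((1:ℝ)/2) := by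
        rw [← ENNReal.rpow_mul]; norm_num
  _ ≤ (ENNReal.ofReal ε ^ (2:ℝ) * 2⁻¹) ^ ((1:ℝ)/2) := by
        apply ENNReal.rpow_le_rpow _ (by norm_num)
        rw [ENNReal.ofReal_rpow_of_pos (by positivity), ENNReal.ofReal_rpow_of_pos hεpos,
          hhalf, ← ENNReal.ofReal_mul (by positivity)]
        apply ENNReal.ofReal_le_ofReal
        rw [Real.rpow_two, Real.rpow_two]; nlinarith
  _ ≤ (∫⁻ z, edist z.1 z.2 ^ (2:ℝ) ∂γ) ^ ((1:ℝ)/2) :=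
        ENNReal.rpow_le_rpow hint (by norm_num)
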